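/- For a symmetric bilinear form B on an n-dimensional inner product space and the inner product of double forms, s₁ = ⟨g^{n−1}/(n−1)!, ⋆⁻¹(B-dual)⟩ equals tr(B); equivalently, ⋆(g^{n−1}·B)/(n−1)! = tr(B). -/

import Mathlib

open scoped BigOperators RealInnerProductSpace

/-- A `(p,q)`-double form on `V` (function version). -/
abbrev DForm (V : Type*) (p q : ℕ) : Type _ := (Fin p → V) → (Fin q → V) → ℝ

/-- Wedge product of (alternating) `p`-forms, determinant convention. -/
noncomputable def wedgeF {V : Type*} {p q : ℕ} (α : (Fin p → V) → ℝ) (β : (Fin q → V) → ℝ) :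
    (Fin (p + q) → V) → ℝ := fun x =>
  (1 / (p.factorial * q.factorial : ℝ)) *
    ∑ σ : Equiv.Perm (Fin (p + q)),
      ((Equiv.Perm.sign σ : ℤ) : ℝ) *
        (α fun i => x (σ (Fin.castAdd q i))) * (β fun j => x (σ (Fin.natAdd p j)))

/-- Exterior (Kulkarni–Nomizu type) product of double forms. -/
noncomputable def dmul {V : Type*} {p q r s : ℕ} (ω : DForm V p q) (η : DForm V r s) :
    DForm V (p + r) (q + s) := fun x y =>
  (1 / (p.factorial * r.factorial * q.factorial * s.factorial : ℝ)) *
    ∑ σ : Equiv.Perm (Fin (p + r)), ∑ τ : Equiv.Perm (Fin (q + s)),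
      ((Equiv.Perm.sign σ : ℤ) : ℝ) * ((Equiv.Perm.sign τ : ℤ) : ℝ) *
        ω (fun i => x (σ (Fin.castAdd r i))) (fun j => y (τ (Fin.castAdd s j))) *
        η (fun i => x (σ (Fin.natAdd p i))) (fun j => y (τ (Fin.natAdd q j)))

/-- Reindexing a double form along equalities of the bidegree. -/
def castD {V : Type*} {p q p' q' : ℕ} (hp : p = p') (hq : q = q') (ω : DForm V p q) :
    DForm V p' q' := fun x y => ω (fun i => x (Fin.cast hp i)) (fun j => y (Fin.cast hq j))

/-- Tensor product of two forms, as a double form. -/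
def tmulD {V : Type*} {p q : ℕ} (α : (Fin p → V) → ℝ) (β : (Fin q → V) → ℝ) : DForm V p q :=
  fun x y => α x * β y

/-- Powers of a double form for the exterior product. -/
noncomputable def dpow {V : Type*} {a b : ℕ} (ω : DForm V a b) : (k : ℕ) → DForm V (a * k) (b * k)
  | 0 => fun _ _ => 1
  | k + 1 => dmul (dpow ω k) ω

/-- The metric, as a `(1,1)`-double form. -/
noncomputable def gmetric {V : Type*} [NormedAddCommGroup V] [InnerProductSpace ℝ V] :
    DForm V 1 1 := fun x y => (inner ℝ (x 0) (y 0) : ℝ)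

/-- A symmetric bilinear form as a `(1,1)`-double form. -/
def bilinD {V : Type*} [AddCommGroup V] [Module ℝ V] (B : V →ₗ[ℝ] V →ₗ[ℝ] ℝ) : DForm V 1 1 :=
  fun x y => B (x 0) (y 0)

/-- The scalar given by a `(0,0)`-double form. -/
def toScalar {V : Type*} (ω : DForm V 0 0) : ℝ := ω Fin.elim0 Fin.elim0

/-- Ricci contraction of a double form with respect to an orthonormal basis. -/
noncomputable def cD {V : Type*} [NormedAddCommGroup V] [InnerProductSpace ℝ V] {n : ℕ}
    (b : OrthonormalBasis (Fin n) ℝ V) {p q : ℕ} (ω : DForm V (p + 1) (q + 1)) : DForm V p q :=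
  fun x y => ∑ i : Fin n, ω (Fin.cons (b i) x) (Fin.cons (b i) y)

/-- Iterated Ricci contraction. -/
noncomputable def cIter {V : Type*} [NormedAddCommGroup V] [InnerProductSpace ℝ V] {n : ℕ}
    (b : OrthonormalBasis (Fin n) ℝ V) :
    ∀ (m : ℕ) {p q : ℕ}, DForm V (p + m) (q + m) → DForm V p q
  | 0, _, _, ω => ω
  | m + 1, _, _, ω => cIter b m (cD b ω)

/-- Symmetry of a `(p,p)`-double form. -/
def IsSymmD {V : Type*} {p : ℕ} (ω : DForm V p p) : Prop := ∀ x y, ω x y = ω y x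

/-- A double form is alternating in each group of arguments. -/
def IsAltD {V : Type*} {p q : ℕ} (ω : DForm V p q) : Prop :=
  (∀ (σ : Equiv.Perm (Fin p)) (x : Fin p → V) (y : Fin q → V),
      ω (x ∘ σ) y = ((Equiv.Perm.sign σ : ℤ) : ℝ) * ω x y) ∧
  (∀ (τ : Equiv.Perm (Fin q)) (x : Fin p → V) (y : Fin q → V),
      ω x (y ∘ τ) = ((Equiv.Perm.sign τ : ℤ) : ℝ) * ω x y)

/-- A double form is multilinear in each argument. -/
def IsMultilinearD {V : Type*} [AddCommGroup V] [Module ℝ V] {p q : ℕ}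
    (ω : DForm V p q) : Prop :=
  (∀ (x : Fin p → V) (i : Fin p) (u v : V) (c : ℝ) (y : Fin q → V),
      ω (Function.update x i (u + c • v)) y
        = ω (Function.update x i u) y + c * ω (Function.update x i v) y) ∧
  (∀ (x : Fin p → V) (y : Fin q → V) (j : Fin q) (u v : V) (c : ℝ),
      ω x (Function.update y j (u + c • v))
        = ω x (Function.update y j u) + c * ω x (Function.update y j v))

/-- The first Bianchi identity for a `(p,q)`-double form. -/
def FirstBianchiD {V : Type*} {p q : ℕ} (ω : DForm V p q) : Prop :=
  ∀ (x : Fin (p + 1) → V) (y : Fin q → V),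
    ∑ i : Fin (p + 1), ((-1 : ℝ) ^ (i : ℕ)) * ω (i.removeNth x) y = 0

/-- The volume form associated to an (oriented) orthonormal basis, extended by `0`
to tuples of the wrong length. -/
noncomputable def volA {V : Type*} [NormedAddCommGroup V] [InnerProductSpace ℝ V] {n : ℕ}
    (b : OrthonormalBasis (Fin n) ℝ V) {m : ℕ} (v : Fin m → V) : ℝ :=
  if h : m = n then
    Matrix.det (Matrix.of fun i j : Fin n => (inner ℝ (b i) (v (Fin.cast h.symm j)) : ℝ)) else 0

/-- Generalized Hodge star operator on double forms. -/
noncomputable def starD {V : Type*} [NormedAddCommGroup V] [InnerProductSpace ℝ V] {n : ℕ}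
    (b : OrthonormalBasis (Fin n) ℝ V) {p q : ℕ} (ω : DForm V p q) :
    DForm V (n - p) (n - q) := fun x y =>
  (1 / (p.factorial * q.factorial : ℝ)) *
    ∑ i : Fin p → Fin n, ∑ j : Fin q → Fin n,
      ω (fun a => b (i a)) (fun a => b (j a)) *
        volA b (Fin.append (fun a => b (i a)) x) * volA b (Fin.append (fun a => b (j a)) y)

/-- The scalar `⋆ω` of an `(n,n)`-double form. -/
noncomputable def starScalar {V : Type*} [NormedAddCommGroup V] [InnerProductSpace ℝ V] {n : ℕ}
    (b : OrthonormalBasis (Fin n) ℝ V) (ω : DForm V n n) : ℝ :=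
  toScalar (castD (Nat.sub_self n) (Nat.sub_self n) (starD b ω))

namespace GB17

open Equiv Finset Matrix

noncomputable def sgnR {α : Type*} [DecidableEq α] [Fintype α] (σ : Equiv.Perm α) : ℝ :=
  ((Equiv.Perm.sign σ : ℤ) : ℝ)

lemma sgnR_mul {α : Type*} [DecidableEq α] [Fintype α] (σ τ : Equiv.Perm α) :
    sgnR (σ * τ) = sgnR σ * sgnR τ := by
  simp [sgnR, _root_.map_mul]

lemma sgnR_sq {α : Type*} [DecidableEq α] [Fintype α] (σ : Equiv.Perm α) :
    sgnR σ * sgnR σ = 1 := by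
  simp [sgnR, ← Int.cast_mul, ← Units.val_mul, Int.units_mul_self]

/-- Embed `Perm (Fin p)` into `Perm (Fin (p+q))` acting on the first block. -/
def EP {p q : ℕ} (γ : Equiv.Perm (Fin p)) : Equiv.Perm (Fin (p + q)) :=
  (finSumFinEquiv (m := p) (n := q)).permCongr (γ.sumCongr (Equiv.refl (Fin q)))

lemma EP_castAdd {p q : ℕ} (γ : Equiv.Perm (Fin p)) (i : Fin p) :
    EP (q := q) γ (Fin.castAdd q i) = Fin.castAdd q (γ i) := by
  simp [EP, Equiv.permCongr_apply]

lemma EP_natAdd {p q : ℕ} (γ : Equiv.Perm (Fin p)) (j : Fin q) :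
    EP (q := q) γ (Fin.natAdd p j) = Fin.natAdd p j := by
  simp [EP, Equiv.permCongr_apply]

lemma sgnR_EP {p q : ℕ} (γ : Equiv.Perm (Fin p)) : sgnR (EP (q := q) γ) = sgnR γ := by
  simp [EP, sgnR, Equiv.Perm.sign_permCongr, Equiv.Perm.sign_sumCongr]

lemma sgnR_permCongr {α β : Type*} [DecidableEq α] [Fintype α] [DecidableEq β] [Fintype β]
    (e : α ≃ β) (σ : Equiv.Perm α) : sgnR (e.permCongr σ) = sgnR σ := by
  simp [sgnR, Equiv.Perm.sign_permCongr]

/-- merging a right-translation sum. -/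
lemma sum_mulRight {α : Type*} [DecidableEq α] [Fintype α] (w : Equiv.Perm α)
    (F : Equiv.Perm α → ℝ) : ∑ σ : Equiv.Perm α, F (σ * w) = ∑ σ : Equiv.Perm α, F σ :=
  Fintype.sum_equiv (Equiv.mulRight w) _ _ (fun _ => rfl)

lemma sum_mulLeft {α : Type*} [DecidableEq α] [Fintype α] (w : Equiv.Perm α)
    (F : Equiv.Perm α → ℝ) : ∑ σ : Equiv.Perm α, F (w * σ) = ∑ σ : Equiv.Perm α, F σ :=
  Fintype.sum_equiv (Equiv.mulLeft w) _ _ (fun _ => rfl)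

lemma merge_mul {α : Type*} [DecidableEq α] [Fintype α] (F : Equiv.Perm α → ℝ) :
    ∑ σ : Equiv.Perm α, ∑ τ : Equiv.Perm α, sgnR σ * sgnR τ * F (σ * τ)
      = ((Fintype.card α).factorial : ℝ) * ∑ ρ : Equiv.Perm α, sgnR ρ * F ρ := by
  have h1 : ∀ σ : Equiv.Perm α,
      (∑ τ : Equiv.Perm α, sgnR σ * sgnR τ * F (σ * τ))
        = ∑ ρ : Equiv.Perm α, sgnR ρ * F ρ := by
    intro σ
    have := sum_mulLeft σ (fun ρ => sgnR ρ * F ρ)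
    rw [← this]
    refine Finset.sum_congr rfl fun τ _ => ?_
    rw [sgnR_mul]
  calc ∑ σ : Equiv.Perm α, ∑ τ : Equiv.Perm α, sgnR σ * sgnR τ * F (σ * τ)
      = ∑ _σ : Equiv.Perm α, ∑ ρ : Equiv.Perm α, sgnR ρ * F ρ :=
        Finset.sum_congr rfl fun σ _ => h1 σ
    _ = ((Fintype.card α).factorial : ℝ) * ∑ ρ : Equiv.Perm α, sgnR ρ * F ρ := by
        rw [Finset.sum_const, Finset.card_univ, Fintype.card_perm, nsmul_eq_mul]

lemma merge_EP {p q : ℕ} (F : Equiv.Perm (Fin (p + q)) → ℝ) :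
    ∑ α : Equiv.Perm (Fin (p + q)), ∑ γ : Equiv.Perm (Fin p),
        sgnR α * sgnR γ * F (α * EP γ)
      = (p.factorial : ℝ) * ∑ ρ : Equiv.Perm (Fin (p + q)), sgnR ρ * F ρ := by
  rw [Finset.sum_comm]
  have h1 : ∀ γ : Equiv.Perm (Fin p),
      (∑ α : Equiv.Perm (Fin (p + q)), sgnR α * sgnR γ * F (α * EP γ))
        = ∑ ρ : Equiv.Perm (Fin (p + q)), sgnR ρ * F ρ := by
    intro γ
    have := sum_mulRight (EP (q := q) γ) (fun ρ => sgnR ρ * F ρ)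
    rw [← this]
    refine Finset.sum_congr rfl fun α _ => ?_
    rw [sgnR_mul, sgnR_EP]
  calc ∑ γ : Equiv.Perm (Fin p), ∑ α : Equiv.Perm (Fin (p + q)),
        sgnR α * sgnR γ * F (α * EP γ)
      = ∑ _γ : Equiv.Perm (Fin p), ∑ ρ : Equiv.Perm (Fin (p + q)), sgnR ρ * F ρ :=
        Finset.sum_congr rfl fun γ _ => h1 γ
    _ = (p.factorial : ℝ) * ∑ ρ : Equiv.Perm (Fin (p + q)), sgnR ρ * F ρ := by
        rw [Finset.sum_const, Finset.card_univ, Fintype.card_perm, nsmul_eq_mul,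
          Fintype.card_fin]

lemma merge3 {N P : ℕ} (h : P + 1 = N) (F : Equiv.Perm (Fin (P + 1)) → ℝ) :
    ∑ σ : Equiv.Perm (Fin N), ∑ α : Equiv.Perm (Fin (P + 1)), ∑ γ : Equiv.Perm (Fin P),
        sgnR σ * sgnR α * sgnR γ * F (((finCongr h).symm.permCongr σ) * α * EP γ)
      = (((P + 1).factorial : ℝ) * (P.factorial : ℝ)) *
          ∑ ρ : Equiv.Perm (Fin (P + 1)), sgnR ρ * F ρ := by
  have step1 : ∑ σ : Equiv.Perm (Fin N), ∑ α : Equiv.Perm (Fin (P + 1)),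
      ∑ γ : Equiv.Perm (Fin P),
        sgnR σ * sgnR α * sgnR γ * F (((finCongr h).symm.permCongr σ) * α * EP γ)
      = ∑ σ' : Equiv.Perm (Fin (P + 1)), ∑ α : Equiv.Perm (Fin (P + 1)),
          ∑ γ : Equiv.Perm (Fin P), sgnR σ' * sgnR α * sgnR γ * F (σ' * α * EP γ) := by
    refine Fintype.sum_equiv ((finCongr h).symm.permCongr)
      (fun σ => ∑ α : Equiv.Perm (Fin (P + 1)), ∑ γ : Equiv.Perm (Fin P),
        sgnR σ * sgnR α * sgnR γ * F (((finCongr h).symm.permCongr σ) * α * EP γ))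
      (fun σ' => ∑ α : Equiv.Perm (Fin (P + 1)), ∑ γ : Equiv.Perm (Fin P),
        sgnR σ' * sgnR α * sgnR γ * F (σ' * α * EP γ)) (fun σ => ?_)
    refine Finset.sum_congr rfl fun α _ => Finset.sum_congr rfl fun γ _ => ?_
    rw [sgnR_permCongr]
  rw [step1]
  have step2 : ∑ σ' : Equiv.Perm (Fin (P + 1)), ∑ α : Equiv.Perm (Fin (P + 1)),
      ∑ γ : Equiv.Perm (Fin P), sgnR σ' * sgnR α * sgnR γ * F (σ' * α * EP γ)
      = ∑ γ : Equiv.Perm (Fin P), ∑ σ' : Equiv.Perm (Fin (P + 1)),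
          ∑ α : Equiv.Perm (Fin (P + 1)), sgnR σ' * sgnR α * sgnR γ * F (σ' * α * EP γ) := by
    exact Eq.trans (Finset.sum_congr rfl fun σ' _ => Finset.sum_comm) Finset.sum_comm
  rw [step2]
  have step3 : ∀ γ : Equiv.Perm (Fin P),
      (∑ σ' : Equiv.Perm (Fin (P + 1)), ∑ α : Equiv.Perm (Fin (P + 1)),
        sgnR σ' * sgnR α * sgnR γ * F (σ' * α * EP γ))
      = ((P + 1).factorial : ℝ) *
          ∑ ρ : Equiv.Perm (Fin (P + 1)), sgnR ρ * (sgnR γ * F (ρ * EP γ)) := by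
    intro γ
    have hmm := merge_mul (fun ρ => sgnR γ * F (ρ * EP γ))
    rw [Fintype.card_fin] at hmm
    rw [← hmm]
    exact Finset.sum_congr rfl fun σ' _ => Finset.sum_congr rfl fun α _ => by ring
  calc ∑ γ : Equiv.Perm (Fin P), ∑ σ' : Equiv.Perm (Fin (P + 1)),
        ∑ α : Equiv.Perm (Fin (P + 1)), sgnR σ' * sgnR α * sgnR γ * F (σ' * α * EP γ)
      = ((P + 1).factorial : ℝ) * ∑ γ : Equiv.Perm (Fin P),
          ∑ ρ : Equiv.Perm (Fin (P + 1)), sgnR ρ * (sgnR γ * F (ρ * EP γ)) := by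
        rw [Finset.mul_sum]
        exact Finset.sum_congr rfl fun γ _ => step3 γ
    _ = ((P + 1).factorial : ℝ) * ∑ ρ : Equiv.Perm (Fin (P + 1)),
          ∑ γ : Equiv.Perm (Fin P), sgnR ρ * sgnR γ * F (ρ * EP γ) := by
        congr 1
        exact Eq.trans Finset.sum_comm
          (Finset.sum_congr rfl fun ρ _ => Finset.sum_congr rfl fun γ _ => by ring)
    _ = (((P + 1).factorial : ℝ) * (P.factorial : ℝ)) *
          ∑ ρ : Equiv.Perm (Fin (P + 1)), sgnR ρ * F ρ := by
        rw [merge_EP (p := P) (q := 1) F, mul_assoc]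

lemma merge6 {N P : ℕ} (h : P + 1 = N)
    (G : Equiv.Perm (Fin (P + 1)) → Equiv.Perm (Fin (P + 1)) → ℝ) :
    ∑ σ : Equiv.Perm (Fin N), ∑ τ : Equiv.Perm (Fin N),
      ∑ α : Equiv.Perm (Fin (P + 1)), ∑ β : Equiv.Perm (Fin (P + 1)),
        ∑ γ : Equiv.Perm (Fin P), ∑ δ : Equiv.Perm (Fin P),
          sgnR σ * sgnR τ * sgnR α * sgnR β * sgnR γ * sgnR δ *
            G (((finCongr h).symm.permCongr σ) * α * EP γ)
              (((finCongr h).symm.permCongr τ) * β * EP δ)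
      = (((P + 1).factorial : ℝ) * (P.factorial : ℝ))^2 *
          ∑ ρ : Equiv.Perm (Fin (P + 1)), ∑ π : Equiv.Perm (Fin (P + 1)),
            sgnR ρ * sgnR π * G ρ π := by
  have reorder : ∑ σ : Equiv.Perm (Fin N), ∑ τ : Equiv.Perm (Fin N),
      ∑ α : Equiv.Perm (Fin (P + 1)), ∑ β : Equiv.Perm (Fin (P + 1)),
        ∑ γ : Equiv.Perm (Fin P), ∑ δ : Equiv.Perm (Fin P),
          sgnR σ * sgnR τ * sgnR α * sgnR β * sgnR γ * sgnR δ *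
            G (((finCongr h).symm.permCongr σ) * α * EP γ)
              (((finCongr h).symm.permCongr τ) * β * EP δ)
      = ∑ σ : Equiv.Perm (Fin N), ∑ α : Equiv.Perm (Fin (P + 1)),
          ∑ γ : Equiv.Perm (Fin P), ∑ τ : Equiv.Perm (Fin N),
            ∑ β : Equiv.Perm (Fin (P + 1)), ∑ δ : Equiv.Perm (Fin P),
              sgnR σ * sgnR τ * sgnR α * sgnR β * sgnR γ * sgnR δ *
                G (((finCongr h).symm.permCongr σ) * α * EP γ)
                  (((finCongr h).symm.permCongr τ) * β * EP δ) := by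
    refine Finset.sum_congr rfl fun σ _ => ?_
    refine Eq.trans Finset.sum_comm (Finset.sum_congr rfl fun α _ => ?_)
    have inner1 : ∀ τ : Equiv.Perm (Fin N),
        (∑ β : Equiv.Perm (Fin (P + 1)), ∑ γ : Equiv.Perm (Fin P), ∑ δ : Equiv.Perm (Fin P),
          sgnR σ * sgnR τ * sgnR α * sgnR β * sgnR γ * sgnR δ *
            G (((finCongr h).symm.permCongr σ) * α * EP γ)
              (((finCongr h).symm.permCongr τ) * β * EP δ))
        = ∑ γ : Equiv.Perm (Fin P), ∑ β : Equiv.Perm (Fin (P + 1)), ∑ δ : Equiv.Perm (Fin P),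
            sgnR σ * sgnR τ * sgnR α * sgnR β * sgnR γ * sgnR δ *
              G (((finCongr h).symm.permCongr σ) * α * EP γ)
                (((finCongr h).symm.permCongr τ) * β * EP δ) := fun τ => Finset.sum_comm
    calc (∑ τ : Equiv.Perm (Fin N), ∑ β : Equiv.Perm (Fin (P + 1)),
          ∑ γ : Equiv.Perm (Fin P), ∑ δ : Equiv.Perm (Fin P),
            sgnR σ * sgnR τ * sgnR α * sgnR β * sgnR γ * sgnR δ *
              G (((finCongr h).symm.permCongr σ) * α * EP γ)
                (((finCongr h).symm.permCongr τ) * β * EP δ))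
        = ∑ τ : Equiv.Perm (Fin N), ∑ γ : Equiv.Perm (Fin P),
            ∑ β : Equiv.Perm (Fin (P + 1)), ∑ δ : Equiv.Perm (Fin P),
              sgnR σ * sgnR τ * sgnR α * sgnR β * sgnR γ * sgnR δ *
                G (((finCongr h).symm.permCongr σ) * α * EP γ)
                  (((finCongr h).symm.permCongr τ) * β * EP δ) :=
          Finset.sum_congr rfl fun τ _ => inner1 τ
      _ = ∑ γ : Equiv.Perm (Fin P), ∑ τ : Equiv.Perm (Fin N),
            ∑ β : Equiv.Perm (Fin (P + 1)), ∑ δ : Equiv.Perm (Fin P),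
              sgnR σ * sgnR τ * sgnR α * sgnR β * sgnR γ * sgnR δ *
                G (((finCongr h).symm.permCongr σ) * α * EP γ)
                  (((finCongr h).symm.permCongr τ) * β * EP δ) := Finset.sum_comm
  rw [reorder]
  have inner : ∀ (σ : Equiv.Perm (Fin N)) (α : Equiv.Perm (Fin (P + 1)))
      (γ : Equiv.Perm (Fin P)),
      (∑ τ : Equiv.Perm (Fin N), ∑ β : Equiv.Perm (Fin (P + 1)), ∑ δ : Equiv.Perm (Fin P),
        sgnR σ * sgnR τ * sgnR α * sgnR β * sgnR γ * sgnR δ *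
          G (((finCongr h).symm.permCongr σ) * α * EP γ)
            (((finCongr h).symm.permCongr τ) * β * EP δ))
      = sgnR σ * sgnR α * sgnR γ *
          ((((P + 1).factorial : ℝ) * (P.factorial : ℝ)) *
            ∑ π : Equiv.Perm (Fin (P + 1)), sgnR π *
              G (((finCongr h).symm.permCongr σ) * α * EP γ) π) := by
    intro σ α γ
    rw [← merge3 h (fun π => G (((finCongr h).symm.permCongr σ) * α * EP γ) π)]
    rw [Finset.mul_sum]
    refine Finset.sum_congr rfl fun τ _ => ?_
    rw [Finset.mul_sum]
    refine Finset.sum_congr rfl fun β _ => ?_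
    rw [Finset.mul_sum]
    refine Finset.sum_congr rfl fun δ _ => ?_
    ring
  calc ∑ σ : Equiv.Perm (Fin N), ∑ α : Equiv.Perm (Fin (P + 1)), ∑ γ : Equiv.Perm (Fin P),
        ∑ τ : Equiv.Perm (Fin N), ∑ β : Equiv.Perm (Fin (P + 1)), ∑ δ : Equiv.Perm (Fin P),
          sgnR σ * sgnR τ * sgnR α * sgnR β * sgnR γ * sgnR δ *
            G (((finCongr h).symm.permCongr σ) * α * EP γ)
              (((finCongr h).symm.permCongr τ) * β * EP δ)
      = (((P + 1).factorial : ℝ) * (P.factorial : ℝ)) *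
          ∑ σ : Equiv.Perm (Fin N), ∑ α : Equiv.Perm (Fin (P + 1)),
            ∑ γ : Equiv.Perm (Fin P), sgnR σ * sgnR α * sgnR γ *
              ((fun ρ => ∑ π : Equiv.Perm (Fin (P + 1)), sgnR π * G ρ π)
                (((finCongr h).symm.permCongr σ) * α * EP γ)) := by
        rw [Finset.mul_sum]
        refine Finset.sum_congr rfl fun σ _ => ?_
        rw [Finset.mul_sum]
        refine Finset.sum_congr rfl fun α _ => ?_
        rw [Finset.mul_sum]
        refine Finset.sum_congr rfl fun γ _ => ?_
        rw [inner σ α γ]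
        ring
    _ = (((P + 1).factorial : ℝ) * (P.factorial : ℝ)) *
          ((((P + 1).factorial : ℝ) * (P.factorial : ℝ)) *
            ∑ ρ : Equiv.Perm (Fin (P + 1)), sgnR ρ *
              ∑ π : Equiv.Perm (Fin (P + 1)), sgnR π * G ρ π) := by
        rw [merge3 h (fun ρ => ∑ π : Equiv.Perm (Fin (P + 1)), sgnR π * G ρ π)]
    _ = (((P + 1).factorial : ℝ) * (P.factorial : ℝ))^2 *
          ∑ ρ : Equiv.Perm (Fin (P + 1)), ∑ π : Equiv.Perm (Fin (P + 1)),
            sgnR ρ * sgnR π * G ρ π := by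
        rw [← mul_assoc, ← sq]
        congr 1
        refine Finset.sum_congr rfl fun ρ _ => ?_
        rw [Finset.mul_sum]
        exact Finset.sum_congr rfl fun π _ => by ring

lemma sgnR_eq {α : Type*} [DecidableEq α] [Fintype α] (σ : Equiv.Perm α) :
    ((Equiv.Perm.sign σ : ℤ) : ℝ) = sgnR σ := rfl

lemma merge4 {P : ℕ} (G : Equiv.Perm (Fin (P + 1)) → Equiv.Perm (Fin (P + 1)) → ℝ) :
    ∑ α : Equiv.Perm (Fin (P + 1)), ∑ β : Equiv.Perm (Fin (P + 1)),
      ∑ γ : Equiv.Perm (Fin P), ∑ δ : Equiv.Perm (Fin P),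
        sgnR α * sgnR β * sgnR γ * sgnR δ * G (α * EP γ) (β * EP δ)
      = ((P.factorial : ℝ))^2 *
          ∑ ρ : Equiv.Perm (Fin (P + 1)), ∑ π : Equiv.Perm (Fin (P + 1)),
            sgnR ρ * sgnR π * G ρ π := by
  have reorder : ∑ α : Equiv.Perm (Fin (P + 1)), ∑ β : Equiv.Perm (Fin (P + 1)),
      ∑ γ : Equiv.Perm (Fin P), ∑ δ : Equiv.Perm (Fin P),
        sgnR α * sgnR β * sgnR γ * sgnR δ * G (α * EP γ) (β * EP δ)
      = ∑ α : Equiv.Perm (Fin (P + 1)), ∑ γ : Equiv.Perm (Fin P),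
          ∑ β : Equiv.Perm (Fin (P + 1)), ∑ δ : Equiv.Perm (Fin P),
            sgnR α * sgnR β * sgnR γ * sgnR δ * G (α * EP γ) (β * EP δ) :=
    Finset.sum_congr rfl fun α _ => Finset.sum_comm
  rw [reorder]
  have inner : ∀ (α : Equiv.Perm (Fin (P + 1))) (γ : Equiv.Perm (Fin P)),
      (∑ β : Equiv.Perm (Fin (P + 1)), ∑ δ : Equiv.Perm (Fin P),
        sgnR α * sgnR β * sgnR γ * sgnR δ * G (α * EP γ) (β * EP δ))
      = sgnR α * sgnR γ * ((P.factorial : ℝ) *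
          ∑ π : Equiv.Perm (Fin (P + 1)), sgnR π * G (α * EP γ) π) := by
    intro α γ
    rw [← merge_EP (p := P) (q := 1) (fun π => G (α * EP γ) π)]
    rw [Finset.mul_sum]
    refine Finset.sum_congr rfl fun β _ => ?_
    rw [Finset.mul_sum]
    refine Finset.sum_congr rfl fun δ _ => ?_
    ring
  calc ∑ α : Equiv.Perm (Fin (P + 1)), ∑ γ : Equiv.Perm (Fin P),
        ∑ β : Equiv.Perm (Fin (P + 1)), ∑ δ : Equiv.Perm (Fin P),
          sgnR α * sgnR β * sgnR γ * sgnR δ * G (α * EP γ) (β * EP δ)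
      = (P.factorial : ℝ) * ∑ α : Equiv.Perm (Fin (P + 1)), ∑ γ : Equiv.Perm (Fin P),
          sgnR α * sgnR γ *
            ((fun ρ => ∑ π : Equiv.Perm (Fin (P + 1)), sgnR π * G ρ π) (α * EP γ)) := by
        rw [Finset.mul_sum]
        refine Finset.sum_congr rfl fun α _ => ?_
        rw [Finset.mul_sum]
        refine Finset.sum_congr rfl fun γ _ => ?_
        rw [inner α γ]
        ring
    _ = (P.factorial : ℝ) * ((P.factorial : ℝ) *
          ∑ ρ : Equiv.Perm (Fin (P + 1)), sgnR ρ *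
            ∑ π : Equiv.Perm (Fin (P + 1)), sgnR π * G ρ π) := by
        rw [merge_EP (p := P) (q := 1)
          (fun ρ => ∑ π : Equiv.Perm (Fin (P + 1)), sgnR π * G ρ π)]
    _ = ((P.factorial : ℝ))^2 *
          ∑ ρ : Equiv.Perm (Fin (P + 1)), ∑ π : Equiv.Perm (Fin (P + 1)),
            sgnR ρ * sgnR π * G ρ π := by
        rw [← mul_assoc, ← sq]
        congr 1
        refine Finset.sum_congr rfl fun ρ _ => ?_
        rw [Finset.mul_sum]
        exact Finset.sum_congr rfl fun π _ => by ring

lemma inner_bb {V : Type*} [NormedAddCommGroup V] [InnerProductSpace ℝ V] {n : ℕ}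
    (b : OrthonormalBasis (Fin n) ℝ V) (i j : Fin n) :
    (inner ℝ (b i) (b j) : ℝ) = if i = j then 1 else 0 :=
  orthonormal_iff_ite.mp b.orthonormal i j

lemma det_delta {n : ℕ} (f : Fin n → Fin n) :
    Matrix.det (Matrix.of fun a j => if a = f j then (1 : ℝ) else 0)
      = if h : Function.Bijective f then sgnR (Equiv.ofBijective f h) else 0 := by
  classical
  by_cases h : Function.Bijective f
  · rw [dif_pos h]
    have hM : (Matrix.of fun a j => if a = f j then (1 : ℝ) else 0)
        = (Equiv.Perm.permMatrix ℝ (Equiv.ofBijective f h))ᵀ := by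
      ext a j
      by_cases h2 : a = f j <;>
        simp [Matrix.transpose_apply, Equiv.Perm.permMatrix, PEquiv.toMatrix_apply,
          Equiv.toPEquiv_apply, h2, Equiv.ofBijective_apply, eq_comm]
    rw [hM, Matrix.det_transpose, Matrix.det_permutation]
    rfl
  · rw [dif_neg h]
    have hni : ¬ Function.Injective f := fun hi => h (Finite.injective_iff_bijective.mp hi)
    rw [Function.Injective] at hni
    push_neg at hni
    obtain ⟨a, c, hfe, hne⟩ := hni
    exact Matrix.det_zero_of_column_eq hne (fun k => by
      simp only [Matrix.of_apply, hfe])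

lemma vol_term {V : Type*} [NormedAddCommGroup V] [InnerProductSpace ℝ V] {n : ℕ}
    (b : OrthonormalBasis (Fin n) ℝ V) (f : Fin n → Fin n) (x : Fin (n - n) → V) :
    volA b (Fin.append (fun a => b (f a)) x)
      = if h : Function.Bijective f then sgnR (Equiv.ofBijective f h) else 0 := by
  have hm : n + (n - n) = n := by omega
  rw [volA, dif_pos hm, ← det_delta f]
  congr 1
  ext a j
  have hc : Fin.cast hm.symm j = Fin.castAdd (n - n) j := rfl
  rw [Matrix.of_apply, Matrix.of_apply, hc, Fin.append_left]
  exact inner_bb b a (f j)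

noncomputable def permBijEquiv (n : ℕ) :
    Equiv.Perm (Fin n) ≃ {f : Fin n → Fin n // Function.Bijective f} :=
  ⟨fun σ => ⟨⇑σ, σ.bijective⟩, fun f => Equiv.ofBijective f.1 f.2,
    fun σ => Equiv.ext fun _ => rfl, fun f => Subtype.ext rfl⟩

lemma sum_bij_restrict {n : ℕ} (F : (Fin n → Fin n) → ℝ)
    (h0 : ∀ f, ¬ Function.Bijective f → F f = 0) :
    ∑ f : Fin n → Fin n, F f = ∑ σ : Equiv.Perm (Fin n), F ⇑σ := by
  classical
  have e : Equiv.Perm (Fin n) ≃ {f : Fin n → Fin n // Function.Bijective f} :=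
    { toFun := fun σ => ⟨⇑σ, σ.bijective⟩
      invFun := fun f => Equiv.ofBijective f.1 f.2
      left_inv := fun σ => Equiv.ext fun _ => rfl
      right_inv := fun f => Subtype.ext rfl }
  calc ∑ f : Fin n → Fin n, F f
      = ∑ f ∈ Finset.univ.filter (fun f : Fin n → Fin n => Function.Bijective f), F f := by
        refine (Finset.sum_filter_of_ne fun f _ hf => ?_).symm
        by_contra hb
        exact hf (h0 f hb)
    _ = ∑ f : {f : Fin n → Fin n // Function.Bijective f}, F f.1 := by
        refine Finset.sum_subtype _ (fun f => ?_) F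
        simp
    _ = ∑ σ : Equiv.Perm (Fin n), F ⇑σ :=
        (Fintype.sum_equiv (permBijEquiv n) (fun σ => F ⇑σ) (fun f => F f.1)
          (fun σ => rfl)).symm

lemma prod_delta {P N : ℕ} (u v : Fin P → Fin N) :
    (∏ i, if u i = v i then (1 : ℝ) else 0) = if ∀ i, u i = v i then 1 else 0 := by
  by_cases h : ∀ i, u i = v i
  · rw [if_pos h]; exact Finset.prod_eq_one fun i _ => if_pos (h i)
  · rw [if_neg h]; push_neg at h; obtain ⟨i, hi⟩ := h
    exact Finset.prod_eq_zero (Finset.mem_univ i) (if_neg hi)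

lemma perm_eq_of_agree {P : ℕ} (ρ π : Equiv.Perm (Fin (P + 1)))
    (h : ∀ i : Fin P, ρ (Fin.castAdd 1 i) = π (Fin.castAdd 1 i)) : ρ = π := by
  have hlast : ρ (Fin.last P) = π (Fin.last P) := by
    rcases Fin.eq_castSucc_or_eq_last (π.symm (ρ (Fin.last P))) with ⟨j, hj⟩ | hj
    · exfalso
      have h2 : ρ (Fin.last P) = π (Fin.castSucc j) := by
        conv_lhs => rw [← π.apply_symm_apply (ρ (Fin.last P)), hj]
      have h3 : π (Fin.castSucc j) = ρ (Fin.castSucc j) := (h j).symm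
      have h4 := ρ.injective (h2.trans h3)
      exact (Fin.castSucc_lt_last j).ne' h4
    · have := congrArg π hj
      rwa [π.apply_symm_apply] at this
  refine Equiv.ext fun x => ?_
  rcases Fin.eq_castSucc_or_eq_last x with ⟨j, hj⟩ | hj
  · rw [hj]; exact h j
  · rw [hj]; exact hlast

lemma sum_perm_last {P : ℕ} (f : Fin (P + 1) → ℝ) :
    ∑ ρ : Equiv.Perm (Fin (P + 1)), f (ρ (Fin.last P))
      = (P.factorial : ℝ) * ∑ k : Fin (P + 1), f k := by
  have h1 : ∑ ρ : Equiv.Perm (Fin (P + 1)), f (ρ (Fin.last P))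
      = ∑ ρ : Equiv.Perm (Fin (P + 1)), f (ρ 0) := by
    refine Fintype.sum_equiv (Equiv.mulRight (Equiv.swap (0 : Fin (P + 1)) (Fin.last P)))
      _ _ (fun ρ => ?_)
    simp [Equiv.Perm.mul_apply, Equiv.swap_apply_left]
  rw [h1]
  have h2 : ∑ ρ : Equiv.Perm (Fin (P + 1)), f (ρ 0)
      = ∑ pe : Fin (P + 1) × Equiv.Perm (Fin P), f (Equiv.Perm.decomposeFin.symm pe 0) :=
    (Fintype.sum_equiv Equiv.Perm.decomposeFin.symm _ _ (fun pe => rfl)).symm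
  rw [h2]
  have h3 : ∀ pe : Fin (P + 1) × Equiv.Perm (Fin P),
      f (Equiv.Perm.decomposeFin.symm pe 0) = f pe.1 := fun pe => by
    rw [Equiv.Perm.decomposeFin_symm_apply_zero]
  calc ∑ pe : Fin (P + 1) × Equiv.Perm (Fin P), f (Equiv.Perm.decomposeFin.symm pe 0)
      = ∑ pe : Fin (P + 1) × Equiv.Perm (Fin P), f pe.1 :=
        Finset.sum_congr rfl fun pe _ => h3 pe
    _ = ∑ k : Fin (P + 1), ∑ _e : Equiv.Perm (Fin P), f k := Fintype.sum_prod_type _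
    _ = (P.factorial : ℝ) * ∑ k : Fin (P + 1), f k := by
        rw [Finset.mul_sum]
        refine Finset.sum_congr rfl fun k _ => ?_
        rw [Finset.sum_const, Finset.card_univ, Fintype.card_perm, Fintype.card_fin,
          nsmul_eq_mul]

lemma dpow_g {V : Type*} [NormedAddCommGroup V] [InnerProductSpace ℝ V] (k : ℕ) :
    ∀ x y : Fin (1 * k) → V,
    dpow (gmetric (V := V)) k x y
      = ∑ α : Equiv.Perm (Fin (1 * k)), ∑ β : Equiv.Perm (Fin (1 * k)),
          sgnR α * sgnR β * ∏ i : Fin (1 * k), (inner ℝ (x (α i)) (y (β i)) : ℝ) := by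
  induction k with
  | zero =>
      intro x y
      have h1 : ∀ α : Equiv.Perm (Fin (1 * 0)), α = 1 := fun α =>
        Equiv.ext fun i => absurd i.isLt (by omega)
      have h2 : ∏ i : Fin (1 * 0),
          (inner ℝ (x ((1 : Equiv.Perm (Fin (1 * 0))) i))
            (y ((1 : Equiv.Perm (Fin (1 * 0))) i)) : ℝ) = 1 :=
        Finset.prod_eq_one fun i _ => absurd i.isLt (by omega)
      rw [Fintype.sum_eq_single (1 : Equiv.Perm (Fin (1 * 0)))
        (fun α hα => absurd (h1 α) hα)]
      rw [Fintype.sum_eq_single (1 : Equiv.Perm (Fin (1 * 0)))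
        (fun β hβ => absurd (h1 β) hβ)]
      rw [h2]
      simp [dpow, sgnR]
  | succ k ih =>
      intro x y
      have hpoint : ∀ (α β : Equiv.Perm (Fin (1 * k + 1))) (γ δ : Equiv.Perm (Fin (1 * k))),
          (∏ i : Fin (1 * k),
            (inner ℝ (x (α (Fin.castAdd 1 (γ i)))) (y (β (Fin.castAdd 1 (δ i)))) : ℝ)) *
              (inner ℝ (x (α (Fin.natAdd (1 * k) 0))) (y (β (Fin.natAdd (1 * k) 0))) : ℝ)
          = ∏ i : Fin (1 * k + 1),
              (inner ℝ (x ((α * EP (q := 1) γ) i)) (y ((β * EP (q := 1) δ) i)) : ℝ) := by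
        intro α β γ δ
        rw [Fin.prod_univ_castSucc]
        congr 1
        · refine Finset.prod_congr rfl fun i _ => ?_
          have e1 : (α * EP (q := 1) γ) (Fin.castSucc i) = α (Fin.castAdd 1 (γ i)) := by
            rw [Equiv.Perm.mul_apply]
            exact congrArg α (EP_castAdd γ i)
          have e2 : (β * EP (q := 1) δ) (Fin.castSucc i) = β (Fin.castAdd 1 (δ i)) := by
            rw [Equiv.Perm.mul_apply]
            exact congrArg β (EP_castAdd δ i)
          rw [e1, e2]
        · have e1 : (α * EP (q := 1) γ) (Fin.last (1 * k)) = α (Fin.natAdd (1 * k) 0) := by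
            rw [Equiv.Perm.mul_apply]
            exact congrArg α (EP_natAdd γ 0)
          have e2 : (β * EP (q := 1) δ) (Fin.last (1 * k)) = β (Fin.natAdd (1 * k) 0) := by
            rw [Equiv.Perm.mul_apply]
            exact congrArg β (EP_natAdd δ 0)
          rw [e1, e2]
      have hfac : ((1 * k).factorial : ℝ) ≠ 0 :=
        Nat.cast_ne_zero.mpr (Nat.factorial_ne_zero _)
      calc dpow (gmetric (V := V)) (k + 1) x y
          = (1 / (((1 * k).factorial : ℝ) * (Nat.factorial 1 : ℝ) *
              ((1 * k).factorial : ℝ) * (Nat.factorial 1 : ℝ))) *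
              ∑ α : Equiv.Perm (Fin (1 * k + 1)), ∑ β : Equiv.Perm (Fin (1 * k + 1)),
                sgnR α * sgnR β *
                  dpow (gmetric (V := V)) k (fun i => x (α (Fin.castAdd 1 i)))
                    (fun j => y (β (Fin.castAdd 1 j))) *
                  (inner ℝ (x (α (Fin.natAdd (1 * k) 0)))
                    (y (β (Fin.natAdd (1 * k) 0))) : ℝ) := rfl
        _ = (1 / (((1 * k).factorial : ℝ) * (Nat.factorial 1 : ℝ) *
              ((1 * k).factorial : ℝ) * (Nat.factorial 1 : ℝ))) *
              ∑ α : Equiv.Perm (Fin (1 * k + 1)), ∑ β : Equiv.Perm (Fin (1 * k + 1)),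
                ∑ γ : Equiv.Perm (Fin (1 * k)), ∑ δ : Equiv.Perm (Fin (1 * k)),
                  sgnR α * sgnR β * sgnR γ * sgnR δ *
                    ((fun ρ π => ∏ i : Fin (1 * k + 1),
                      (inner ℝ (x (ρ i)) (y (π i)) : ℝ)) (α * EP (q := 1) γ) (β * EP (q := 1) δ)) := by
            congr 1
            refine Finset.sum_congr rfl fun α _ => ?_
            refine Finset.sum_congr rfl fun β _ => ?_
            rw [ih (fun i => x (α (Fin.castAdd 1 i))) (fun j => y (β (Fin.castAdd 1 j)))]
            rw [Finset.mul_sum, Finset.sum_mul]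
            refine Finset.sum_congr rfl fun γ _ => ?_
            rw [Finset.mul_sum, Finset.sum_mul]
            refine Finset.sum_congr rfl fun δ _ => ?_
            beta_reduce
            rw [← hpoint α β γ δ]
            ring
        _ = (1 / (((1 * k).factorial : ℝ) * (Nat.factorial 1 : ℝ) *
              ((1 * k).factorial : ℝ) * (Nat.factorial 1 : ℝ))) *
              ((((1 * k).factorial : ℝ))^2 *
                ∑ ρ : Equiv.Perm (Fin (1 * k + 1)), ∑ π : Equiv.Perm (Fin (1 * k + 1)),
                  sgnR ρ * sgnR π * ∏ i : Fin (1 * k + 1),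
                    (inner ℝ (x (ρ i)) (y (π i)) : ℝ)) := by
            rw [merge4 (P := 1 * k)
              (fun ρ π => ∏ i : Fin (1 * k + 1), (inner ℝ (x (ρ i)) (y (π i)) : ℝ))]
        _ = ∑ ρ : Equiv.Perm (Fin (1 * k + 1)), ∑ π : Equiv.Perm (Fin (1 * k + 1)),
              sgnR ρ * sgnR π * ∏ i : Fin (1 * k + 1),
                (inner ℝ (x (ρ i)) (y (π i)) : ℝ) := by
            rw [Nat.factorial_one, Nat.cast_one, mul_one, mul_one, sq]
            rw [one_div, inv_mul_cancel_left₀ (mul_ne_zero hfac hfac)]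

end GB17

open GB17

/-- `⋆(g^{n−1}·B)/(n−1)! = tr B` for a symmetric bilinear form `B`. -/
theorem gaussBonnet_stmt17 {V : Type*} [NormedAddCommGroup V] [InnerProductSpace ℝ V]
    {n : ℕ} (hn : 1 ≤ n) (b : OrthonormalBasis (Fin n) ℝ V)
    (B : V →ₗ[ℝ] V →ₗ[ℝ] ℝ) (hB : ∀ u v, B u v = B v u) :
    (1 / ((n - 1).factorial : ℝ)) *
        starScalar b (castD (by omega) (by omega)
          (dmul (dpow (gmetric (V := V)) (n - 1)) (bilinD B)))
      = ∑ i : Fin n, B (b i) (b i) := by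
  classical
  have hp : 1 * (n - 1) + 1 = n := by omega
  have hof : ∀ ρ : Equiv.Perm (Fin n), Equiv.ofBijective ⇑ρ ρ.bijective = ρ :=
    fun ρ => Equiv.ext fun _ => rfl
  have hcast : ∀ (σ : Equiv.Perm (Fin n)) (v : Fin (1 * (n - 1) + 1)),
      Fin.cast hp (((finCongr hp).symm.permCongr σ) v) = σ (Fin.cast hp v) := by
    intro σ v
    simp only [Equiv.permCongr_apply, Equiv.symm_symm]
    simp only [← finCongr_apply, Equiv.apply_symm_apply]
  have hidxA : ∀ (σ : Equiv.Perm (Fin n)) (α : Equiv.Perm (Fin (1 * (n - 1) + 1))) (γ : Equiv.Perm (Fin (1 * (n - 1)))) (i : Fin (1 * (n - 1))),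
      Fin.cast hp ((((finCongr hp).symm.permCongr σ) * α * GB17.EP (q := 1) γ)
          (Fin.castAdd 1 i))
        = σ (Fin.cast hp (α (Fin.castAdd 1 (γ i)))) := by
    intro σ α γ i
    rw [Equiv.Perm.mul_apply, Equiv.Perm.mul_apply, GB17.EP_castAdd]
    exact hcast σ _
  have hidxL : ∀ (σ : Equiv.Perm (Fin n)) (α : Equiv.Perm (Fin (1 * (n - 1) + 1))) (γ : Equiv.Perm (Fin (1 * (n - 1)))),
      Fin.cast hp ((((finCongr hp).symm.permCongr σ) * α * GB17.EP (q := 1) γ)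
          (Fin.natAdd (1 * (n - 1)) 0))
        = σ (Fin.cast hp (α (Fin.natAdd (1 * (n - 1)) 0))) := by
    intro σ α γ
    rw [Equiv.Perm.mul_apply, Equiv.Perm.mul_apply, GB17.EP_natAdd]
    exact hcast σ _
  have hprod : ∀ (σ τ : Equiv.Perm (Fin n)) (α β : Equiv.Perm (Fin (1 * (n - 1) + 1))) (γ δ : Equiv.Perm (Fin (1 * (n - 1)))),
      (∏ i : Fin (1 * (n - 1)),
        (inner ℝ (b (σ (Fin.cast hp (α (Fin.castAdd 1 (γ i))))))
          (b (τ (Fin.cast hp (β (Fin.castAdd 1 (δ i)))))) : ℝ)) *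
        B (b (σ (Fin.cast hp (α (Fin.natAdd (1 * (n - 1)) 0)))))
          (b (τ (Fin.cast hp (β (Fin.natAdd (1 * (n - 1)) 0)))))
      = (∏ i : Fin (1 * (n - 1)),
          (inner ℝ (b (Fin.cast hp ((((finCongr hp).symm.permCongr σ) * α * GB17.EP (q := 1) γ) (Fin.castAdd 1 i))))
            (b (Fin.cast hp ((((finCongr hp).symm.permCongr τ) * β * GB17.EP (q := 1) δ) (Fin.castAdd 1 i)))) : ℝ)) *
          B (b (Fin.cast hp ((((finCongr hp).symm.permCongr σ) * α * GB17.EP (q := 1) γ) (Fin.natAdd (1 * (n - 1)) 0))))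
            (b (Fin.cast hp ((((finCongr hp).symm.permCongr τ) * β * GB17.EP (q := 1) δ) (Fin.natAdd (1 * (n - 1)) 0)))) := by
    intro σ τ α β γ δ
    congr 1
    · refine Finset.prod_congr rfl fun i _ => ?_
      rw [hidxA σ α γ i, hidxA τ β δ i]
    · rw [hidxL σ α γ, hidxL τ β δ]
  have hG' : ∀ ρ π : Equiv.Perm (Fin (1 * (n - 1) + 1)),
      (∏ i : Fin (1 * (n - 1)),
        (inner ℝ (b (Fin.cast hp (ρ (Fin.castAdd 1 i))))
          (b (Fin.cast hp (π (Fin.castAdd 1 i)))) : ℝ))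
      = if ρ = π then 1 else 0 := by
    intro ρ π
    calc (∏ i : Fin (1 * (n - 1)),
        (inner ℝ (b (Fin.cast hp (ρ (Fin.castAdd 1 i))))
          (b (Fin.cast hp (π (Fin.castAdd 1 i)))) : ℝ))
        = ∏ i : Fin (1 * (n - 1)),
            if Fin.cast hp (ρ (Fin.castAdd 1 i)) = Fin.cast hp (π (Fin.castAdd 1 i))
              then (1 : ℝ) else 0 :=
          Finset.prod_congr rfl fun i _ => GB17.inner_bb b _ _
      _ = if (∀ i : Fin (1 * (n - 1)),
            Fin.cast hp (ρ (Fin.castAdd 1 i)) = Fin.cast hp (π (Fin.castAdd 1 i)))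
              then 1 else 0 := GB17.prod_delta _ _
      _ = if ρ = π then 1 else 0 := by
          by_cases hh : ρ = π
          · subst hh
            rw [if_pos (fun i => rfl), if_pos rfl]
          · rw [if_neg ?_, if_neg hh]
            intro hall
            refine hh (GB17.perm_eq_of_agree ρ π (fun i => ?_))
            have h5 := hall i
            have h6 : (Fin.cast hp (ρ (Fin.castAdd 1 i))).val
                = (Fin.cast hp (π (Fin.castAdd 1 i))).val := congrArg Fin.val h5
            simp only [Fin.coe_cast] at h6
            exact Fin.ext h6
  have main2 : ∀ ω : DForm V n n,
      (∀ σ τ : Equiv.Perm (Fin n), ω (fun a => b (σ a)) (fun a => b (τ a))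
        = (1 / (((1 * (n - 1)).factorial : ℝ) * ((Nat.factorial 1 : ℕ) : ℝ) *
      ((1 * (n - 1)).factorial : ℝ) * ((Nat.factorial 1 : ℕ) : ℝ))) *
          (∑ α : Equiv.Perm (Fin (1 * (n - 1) + 1)), ∑ β : Equiv.Perm (Fin (1 * (n - 1) + 1)), ∑ γ : Equiv.Perm (Fin (1 * (n - 1))), ∑ δ : Equiv.Perm (Fin (1 * (n - 1))),
            sgnR α * sgnR β * sgnR γ * sgnR δ *
              (fun rr pp : Equiv.Perm (Fin (1 * (n - 1) + 1)) =>
      (∏ i : Fin (1 * (n - 1)),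
        (inner ℝ (b (Fin.cast hp (rr (Fin.castAdd 1 i))))
          (b (Fin.cast hp (pp (Fin.castAdd 1 i)))) : ℝ)) *
      B (b (Fin.cast hp (rr (Fin.natAdd (1 * (n - 1)) 0))))
        (b (Fin.cast hp (pp (Fin.natAdd (1 * (n - 1)) 0))))) (((finCongr hp).symm.permCongr σ) * α * GB17.EP (q := 1) γ) (((finCongr hp).symm.permCongr τ) * β * GB17.EP (q := 1) δ))) →
      (1 / ((n - 1).factorial : ℝ)) * starScalar b ω = ∑ i : Fin n, B (b i) (b i) := by
    intro ω hω
    have h2' : ∀ (x y : Fin (n - n) → V), starD b ω x y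
        = (1 / ((n.factorial : ℝ) * (n.factorial : ℝ))) *
            (∑ σ : Equiv.Perm (Fin n), ∑ τ : Equiv.Perm (Fin n),
          sgnR σ * sgnR τ * ω (fun a => b (σ a)) (fun a => b (τ a))) := by
      intro x y
      have h2 : starD b ω x y = (1 / ((n.factorial : ℝ) * (n.factorial : ℝ))) *
          ∑ i : Fin n → Fin n, ∑ j : Fin n → Fin n,
            ω (fun a => b (i a)) (fun a => b (j a)) *
              volA b (Fin.append (fun a => b (i a)) x) *
              volA b (Fin.append (fun a => b (j a)) y) := rfl
      rw [h2]
      congr 1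
      rw [GB17.sum_bij_restrict (fun f => ∑ j : Fin n → Fin n,
            ω (fun a => b (f a)) (fun a => b (j a)) *
              volA b (Fin.append (fun a => b (f a)) x) *
              volA b (Fin.append (fun a => b (j a)) y))
          (fun f hf => Finset.sum_eq_zero fun j _ => by
            rw [GB17.vol_term b f x, dif_neg hf, mul_zero, zero_mul])]
      refine Finset.sum_congr rfl fun σ _ => ?_
      beta_reduce
      rw [GB17.sum_bij_restrict (fun g =>
            ω (fun a => b (σ a)) (fun a => b (g a)) *
              volA b (Fin.append (fun a => b (σ a)) x) *
              volA b (Fin.append (fun a => b (g a)) y))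
          (fun g hg => by
            beta_reduce
            rw [GB17.vol_term b g y, dif_neg hg, mul_zero])]
      refine Finset.sum_congr rfl fun τ _ => ?_
      beta_reduce
      rw [GB17.vol_term b (⇑σ) x, GB17.vol_term b (⇑τ) y, dif_pos σ.bijective,
        dif_pos τ.bijective, hof σ, hof τ]
      ring
    have h3 : starScalar b ω = (1 / ((n.factorial : ℝ) * (n.factorial : ℝ))) *
        (∑ σ : Equiv.Perm (Fin n), ∑ τ : Equiv.Perm (Fin n),
          sgnR σ * sgnR τ * ω (fun a => b (σ a)) (fun a => b (τ a))) := by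
      have hx : starScalar b ω = starD b ω
          (fun i => Fin.elim0 (Fin.cast (Nat.sub_self n) i))
          (fun j => Fin.elim0 (Fin.cast (Nat.sub_self n) j)) := rfl
      rw [hx]
      exact h2' _ _
    have hbig : (∑ σ : Equiv.Perm (Fin n), ∑ τ : Equiv.Perm (Fin n),
          sgnR σ * sgnR τ * ω (fun a => b (σ a)) (fun a => b (τ a)))
        = (1 / (((1 * (n - 1)).factorial : ℝ) * ((Nat.factorial 1 : ℕ) : ℝ) *
      ((1 * (n - 1)).factorial : ℝ) * ((Nat.factorial 1 : ℕ) : ℝ))) * (∑ σ : Equiv.Perm (Fin n), ∑ τ : Equiv.Perm (Fin n), ∑ α : Equiv.Perm (Fin (1 * (n - 1) + 1)), ∑ β : Equiv.Perm (Fin (1 * (n - 1) + 1)),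
          ∑ γ : Equiv.Perm (Fin (1 * (n - 1))), ∑ δ : Equiv.Perm (Fin (1 * (n - 1))),
            sgnR σ * sgnR τ * sgnR α * sgnR β * sgnR γ * sgnR δ *
              (fun rr pp : Equiv.Perm (Fin (1 * (n - 1) + 1)) =>
      (∏ i : Fin (1 * (n - 1)),
        (inner ℝ (b (Fin.cast hp (rr (Fin.castAdd 1 i))))
          (b (Fin.cast hp (pp (Fin.castAdd 1 i)))) : ℝ)) *
      B (b (Fin.cast hp (rr (Fin.natAdd (1 * (n - 1)) 0))))
        (b (Fin.cast hp (pp (Fin.natAdd (1 * (n - 1)) 0))))) (((finCongr hp).symm.permCongr σ) * α * GB17.EP (q := 1) γ) (((finCongr hp).symm.permCongr τ) * β * GB17.EP (q := 1) δ)) := by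
      rw [Finset.mul_sum]
      refine Finset.sum_congr rfl fun σ _ => ?_
      rw [Finset.mul_sum]
      refine Finset.sum_congr rfl fun τ _ => ?_
      rw [hω σ τ]
      simp only [Finset.mul_sum]
      refine Finset.sum_congr rfl fun α _ => Finset.sum_congr rfl fun β _ =>
        Finset.sum_congr rfl fun γ _ => Finset.sum_congr rfl fun δ _ => by ring
    have hdiag : (∑ ρ : Equiv.Perm (Fin (1 * (n - 1) + 1)), ∑ π : Equiv.Perm (Fin (1 * (n - 1) + 1)), sgnR ρ * sgnR π * (fun rr pp : Equiv.Perm (Fin (1 * (n - 1) + 1)) =>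
      (∏ i : Fin (1 * (n - 1)),
        (inner ℝ (b (Fin.cast hp (rr (Fin.castAdd 1 i))))
          (b (Fin.cast hp (pp (Fin.castAdd 1 i)))) : ℝ)) *
      B (b (Fin.cast hp (rr (Fin.natAdd (1 * (n - 1)) 0))))
        (b (Fin.cast hp (pp (Fin.natAdd (1 * (n - 1)) 0))))) ρ π) = (((1 * (n - 1)).factorial : ℝ) *
            ∑ k : Fin (1 * (n - 1) + 1), B (b (Fin.cast hp k)) (b (Fin.cast hp k))) := by
      have hstep : ∀ ρ : Equiv.Perm (Fin (1 * (n - 1) + 1)),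
          (∑ π : Equiv.Perm (Fin (1 * (n - 1) + 1)), sgnR ρ * sgnR π * (fun rr pp : Equiv.Perm (Fin (1 * (n - 1) + 1)) =>
      (∏ i : Fin (1 * (n - 1)),
        (inner ℝ (b (Fin.cast hp (rr (Fin.castAdd 1 i))))
          (b (Fin.cast hp (pp (Fin.castAdd 1 i)))) : ℝ)) *
      B (b (Fin.cast hp (rr (Fin.natAdd (1 * (n - 1)) 0))))
        (b (Fin.cast hp (pp (Fin.natAdd (1 * (n - 1)) 0))))) ρ π)
          = B (b (Fin.cast hp (ρ (Fin.natAdd (1 * (n - 1)) 0))))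
              (b (Fin.cast hp (ρ (Fin.natAdd (1 * (n - 1)) 0)))) := by
        intro ρ
        have hvan : ∀ π : Equiv.Perm (Fin (1 * (n - 1) + 1)), π ≠ ρ →
            sgnR ρ * sgnR π * (fun rr pp : Equiv.Perm (Fin (1 * (n - 1) + 1)) =>
      (∏ i : Fin (1 * (n - 1)),
        (inner ℝ (b (Fin.cast hp (rr (Fin.castAdd 1 i))))
          (b (Fin.cast hp (pp (Fin.castAdd 1 i)))) : ℝ)) *
      B (b (Fin.cast hp (rr (Fin.natAdd (1 * (n - 1)) 0))))
        (b (Fin.cast hp (pp (Fin.natAdd (1 * (n - 1)) 0))))) ρ π = 0 := by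
          intro π hπ
          beta_reduce
          rw [hG' ρ π, if_neg (fun hh => hπ hh.symm), zero_mul, mul_zero]
        rw [Fintype.sum_eq_single ρ hvan]
        beta_reduce
        rw [hG' ρ ρ]
        rw [if_pos rfl]
        rw [GB17.sgnR_sq]
        exact (one_mul _).trans (one_mul _)
      calc (∑ ρ : Equiv.Perm (Fin (1 * (n - 1) + 1)), ∑ π : Equiv.Perm (Fin (1 * (n - 1) + 1)), sgnR ρ * sgnR π * (fun rr pp : Equiv.Perm (Fin (1 * (n - 1) + 1)) =>
      (∏ i : Fin (1 * (n - 1)),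
        (inner ℝ (b (Fin.cast hp (rr (Fin.castAdd 1 i))))
          (b (Fin.cast hp (pp (Fin.castAdd 1 i)))) : ℝ)) *
      B (b (Fin.cast hp (rr (Fin.natAdd (1 * (n - 1)) 0))))
        (b (Fin.cast hp (pp (Fin.natAdd (1 * (n - 1)) 0))))) ρ π)
          = ∑ ρ : Equiv.Perm (Fin (1 * (n - 1) + 1)), B (b (Fin.cast hp (ρ (Fin.natAdd (1 * (n - 1)) 0))))
              (b (Fin.cast hp (ρ (Fin.natAdd (1 * (n - 1)) 0)))) :=
            Finset.sum_congr rfl fun ρ _ => hstep ρ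
        _ = (((1 * (n - 1)).factorial : ℝ) *
            ∑ k : Fin (1 * (n - 1) + 1), B (b (Fin.cast hp k)) (b (Fin.cast hp k))) :=
            GB17.sum_perm_last (P := 1 * (n - 1))
              (fun k => B (b (Fin.cast hp k)) (b (Fin.cast hp k)))
    calc (1 / ((n - 1).factorial : ℝ)) * starScalar b ω
        = (1 / ((n - 1).factorial : ℝ)) *
            ((1 / ((n.factorial : ℝ) * (n.factorial : ℝ))) * (∑ σ : Equiv.Perm (Fin n), ∑ τ : Equiv.Perm (Fin n),
          sgnR σ * sgnR τ * ω (fun a => b (σ a)) (fun a => b (τ a)))) := by rw [h3]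
      _ = (1 / ((n - 1).factorial : ℝ)) *
            ((1 / ((n.factorial : ℝ) * (n.factorial : ℝ))) *
              ((1 / (((1 * (n - 1)).factorial : ℝ) * ((Nat.factorial 1 : ℕ) : ℝ) *
      ((1 * (n - 1)).factorial : ℝ) * ((Nat.factorial 1 : ℕ) : ℝ))) * (∑ σ : Equiv.Perm (Fin n), ∑ τ : Equiv.Perm (Fin n), ∑ α : Equiv.Perm (Fin (1 * (n - 1) + 1)), ∑ β : Equiv.Perm (Fin (1 * (n - 1) + 1)),
          ∑ γ : Equiv.Perm (Fin (1 * (n - 1))), ∑ δ : Equiv.Perm (Fin (1 * (n - 1))),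
            sgnR σ * sgnR τ * sgnR α * sgnR β * sgnR γ * sgnR δ *
              (fun rr pp : Equiv.Perm (Fin (1 * (n - 1) + 1)) =>
      (∏ i : Fin (1 * (n - 1)),
        (inner ℝ (b (Fin.cast hp (rr (Fin.castAdd 1 i))))
          (b (Fin.cast hp (pp (Fin.castAdd 1 i)))) : ℝ)) *
      B (b (Fin.cast hp (rr (Fin.natAdd (1 * (n - 1)) 0))))
        (b (Fin.cast hp (pp (Fin.natAdd (1 * (n - 1)) 0))))) (((finCongr hp).symm.permCongr σ) * α * GB17.EP (q := 1) γ) (((finCongr hp).symm.permCongr τ) * β * GB17.EP (q := 1) δ)))) := by rw [hbig]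
      _ = (1 / ((n - 1).factorial : ℝ)) *
            ((1 / ((n.factorial : ℝ) * (n.factorial : ℝ))) *
              ((1 / (((1 * (n - 1)).factorial : ℝ) * ((Nat.factorial 1 : ℕ) : ℝ) *
      ((1 * (n - 1)).factorial : ℝ) * ((Nat.factorial 1 : ℕ) : ℝ))) * (((((1 * (n - 1) + 1).factorial : ℝ) * ((1 * (n - 1)).factorial : ℝ)) ^ 2) * (∑ ρ : Equiv.Perm (Fin (1 * (n - 1) + 1)), ∑ π : Equiv.Perm (Fin (1 * (n - 1) + 1)), sgnR ρ * sgnR π * (fun rr pp : Equiv.Perm (Fin (1 * (n - 1) + 1)) =>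
      (∏ i : Fin (1 * (n - 1)),
        (inner ℝ (b (Fin.cast hp (rr (Fin.castAdd 1 i))))
          (b (Fin.cast hp (pp (Fin.castAdd 1 i)))) : ℝ)) *
      B (b (Fin.cast hp (rr (Fin.natAdd (1 * (n - 1)) 0))))
        (b (Fin.cast hp (pp (Fin.natAdd (1 * (n - 1)) 0))))) ρ π)))) := by
            rw [GB17.merge6 hp (fun rr pp : Equiv.Perm (Fin (1 * (n - 1) + 1)) =>
      (∏ i : Fin (1 * (n - 1)),
        (inner ℝ (b (Fin.cast hp (rr (Fin.castAdd 1 i))))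
          (b (Fin.cast hp (pp (Fin.castAdd 1 i)))) : ℝ)) *
      B (b (Fin.cast hp (rr (Fin.natAdd (1 * (n - 1)) 0))))
        (b (Fin.cast hp (pp (Fin.natAdd (1 * (n - 1)) 0)))))]
      _ = (1 / ((n - 1).factorial : ℝ)) *
            ((1 / ((n.factorial : ℝ) * (n.factorial : ℝ))) *
              ((1 / (((1 * (n - 1)).factorial : ℝ) * ((Nat.factorial 1 : ℕ) : ℝ) *
      ((1 * (n - 1)).factorial : ℝ) * ((Nat.factorial 1 : ℕ) : ℝ))) * (((((1 * (n - 1) + 1).factorial : ℝ) * ((1 * (n - 1)).factorial : ℝ)) ^ 2) * (((1 * (n - 1)).factorial : ℝ) *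
            ∑ k : Fin (1 * (n - 1) + 1), B (b (Fin.cast hp k)) (b (Fin.cast hp k)))))) := by rw [hdiag]
      _ = ∑ i : Fin n, B (b i) (b i) := by
          have hk : (∑ k : Fin (1 * (n - 1) + 1), B (b (Fin.cast hp k)) (b (Fin.cast hp k)))
              = ∑ i : Fin n, B (b i) (b i) :=
            Fintype.sum_equiv (finCongr hp) _ _ (fun k => by rw [finCongr_apply])
          rw [hk]
          have e1 : 1 * (n - 1) = n - 1 := one_mul _
          rw [e1]
          have e2 : n - 1 + 1 = n := by omega
          rw [e2]
          simp only [Nat.factorial_one, Nat.cast_one, mul_one]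
          have hf1 : ((n - 1).factorial : ℝ) ≠ 0 := Nat.cast_ne_zero.mpr (Nat.factorial_ne_zero _)
          have hf2 : ((n).factorial : ℝ) ≠ 0 := Nat.cast_ne_zero.mpr (Nat.factorial_ne_zero _)
          field_simp
  have hconc : ∀ σ τ : Equiv.Perm (Fin n),
      castD hp hp (dmul (dpow (gmetric (V := V)) (n - 1)) (bilinD B))
          (fun a => b (σ a)) (fun a => b (τ a))
        = (1 / (((1 * (n - 1)).factorial : ℝ) * ((Nat.factorial 1 : ℕ) : ℝ) *
      ((1 * (n - 1)).factorial : ℝ) * ((Nat.factorial 1 : ℕ) : ℝ))) *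
          (∑ α : Equiv.Perm (Fin (1 * (n - 1) + 1)), ∑ β : Equiv.Perm (Fin (1 * (n - 1) + 1)), ∑ γ : Equiv.Perm (Fin (1 * (n - 1))), ∑ δ : Equiv.Perm (Fin (1 * (n - 1))),
            sgnR α * sgnR β * sgnR γ * sgnR δ *
              (fun rr pp : Equiv.Perm (Fin (1 * (n - 1) + 1)) =>
      (∏ i : Fin (1 * (n - 1)),
        (inner ℝ (b (Fin.cast hp (rr (Fin.castAdd 1 i))))
          (b (Fin.cast hp (pp (Fin.castAdd 1 i)))) : ℝ)) *
      B (b (Fin.cast hp (rr (Fin.natAdd (1 * (n - 1)) 0))))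
        (b (Fin.cast hp (pp (Fin.natAdd (1 * (n - 1)) 0))))) (((finCongr hp).symm.permCongr σ) * α * GB17.EP (q := 1) γ) (((finCongr hp).symm.permCongr τ) * β * GB17.EP (q := 1) δ)) := by
    intro σ τ
    calc castD hp hp (dmul (dpow (gmetric (V := V)) (n - 1)) (bilinD B))
          (fun a => b (σ a)) (fun a => b (τ a))
        = (1 / (((1 * (n - 1)).factorial : ℝ) * ((Nat.factorial 1 : ℕ) : ℝ) *
      ((1 * (n - 1)).factorial : ℝ) * ((Nat.factorial 1 : ℕ) : ℝ))) *
          ∑ α : Equiv.Perm (Fin (1 * (n - 1) + 1)), ∑ β : Equiv.Perm (Fin (1 * (n - 1) + 1)),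
            sgnR α * sgnR β *
              dpow (gmetric (V := V)) (n - 1)
                (fun i => b (σ (Fin.cast hp (α (Fin.castAdd 1 i)))))
                (fun j => b (τ (Fin.cast hp (β (Fin.castAdd 1 j))))) *
              B (b (σ (Fin.cast hp (α (Fin.natAdd (1 * (n - 1)) 0)))))
                (b (τ (Fin.cast hp (β (Fin.natAdd (1 * (n - 1)) 0))))) := rfl
      _ = (1 / (((1 * (n - 1)).factorial : ℝ) * ((Nat.factorial 1 : ℕ) : ℝ) *
      ((1 * (n - 1)).factorial : ℝ) * ((Nat.factorial 1 : ℕ) : ℝ))) *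
          (∑ α : Equiv.Perm (Fin (1 * (n - 1) + 1)), ∑ β : Equiv.Perm (Fin (1 * (n - 1) + 1)), ∑ γ : Equiv.Perm (Fin (1 * (n - 1))), ∑ δ : Equiv.Perm (Fin (1 * (n - 1))),
            sgnR α * sgnR β * sgnR γ * sgnR δ *
              (fun rr pp : Equiv.Perm (Fin (1 * (n - 1) + 1)) =>
      (∏ i : Fin (1 * (n - 1)),
        (inner ℝ (b (Fin.cast hp (rr (Fin.castAdd 1 i))))
          (b (Fin.cast hp (pp (Fin.castAdd 1 i)))) : ℝ)) *
      B (b (Fin.cast hp (rr (Fin.natAdd (1 * (n - 1)) 0))))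
        (b (Fin.cast hp (pp (Fin.natAdd (1 * (n - 1)) 0))))) (((finCongr hp).symm.permCongr σ) * α * GB17.EP (q := 1) γ) (((finCongr hp).symm.permCongr τ) * β * GB17.EP (q := 1) δ)) := by
          congr 1
          refine Finset.sum_congr rfl fun α _ => Finset.sum_congr rfl fun β _ => ?_
          rw [GB17.dpow_g (n - 1)]
          rw [Finset.mul_sum, Finset.sum_mul]
          refine Finset.sum_congr rfl fun γ _ => ?_
          rw [Finset.mul_sum, Finset.sum_mul]
          refine Finset.sum_congr rfl fun δ _ => ?_
          beta_reduce
          rw [← hprod σ τ α β γ δ]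
          ring
  exact main2 (castD hp hp (dmul (dpow (gmetric (V := V)) (n - 1)) (bilinD B))) hconc
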